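/- Every algebraic and spatial lattice is isomorphic to a direct product of directly indecomposable lattices (Libkin's Decomposition Theorem). -/

import Mathlib

universe u

/-- An element `a` of a lattice is *neutral* if every triple `{a, x, y}`
generates a distributive sublattice; we use the standard equational
characterization. -/
def IsNeutral {L : Type*} [Lattice L] (a : L) : Prop :=
  ∀ x y : L, (a ⊔ x) ⊓ (a ⊔ y) ⊓ (x ⊔ y) = (a ⊓ x) ⊔ (a ⊓ y) ⊔ (x ⊓ y)

/-- An element of a bounded lattice is *central* if it is neutral and complemented. -/
def IsCentral {L : Type*} [Lattice L] [BoundedOrder L] (a : L) : Prop :=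
  IsNeutral a ∧ ∃ b : L, a ⊓ b = ⊥ ∧ a ⊔ b = ⊤

/-- `a` is an atom of the center `Cen L`. -/
def IsCenterAtom {L : Type*} [Lattice L] [BoundedOrder L] (a : L) : Prop :=
  IsCentral a ∧ a ≠ ⊥ ∧ ∀ b : L, IsCentral b → b < a → b = ⊥

/-- A bounded lattice is *directly indecomposable* if whenever it is isomorphic to a
product of two bounded lattices, one of the factors is trivial. -/
def DirectlyIndecomposable (M : Type u) [Lattice M] [BoundedOrder M] : Prop :=
  ∀ A B : BddLat.{u}, Nonempty (M ≃o ↥A × ↥B) → Subsingleton ↥A ∨ Subsingleton ↥B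

/-- A bounded lattice is *totally decomposable* if it is isomorphic to a direct product
of directly indecomposable lattices. -/
def TotallyDecomposable (M : Type u) [Lattice M] [BoundedOrder M] : Prop :=
  ∃ (ι : Type u) (F : ι → BddLat.{u}),
    (∀ i, DirectlyIndecomposable ↥(F i)) ∧ Nonempty (M ≃o ∀ i, ↥(F i))

/-- `p` is completely join-irreducible: `p ≠ ⊥` and the join of all elements
strictly below `p` is strictly below `p` (i.e. `p` has a unique lower cover). -/
def CompletelySupIrred {L : Type*} [CompleteLattice L] (p : L) : Prop :=
  p ≠ ⊥ ∧ sSup {v : L | v < p} < p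

section NeutralLemmas
variable {L : Type*} [Lattice L] {a : L}

lemma IsNeutral.inf_sup_of_le (ha : IsNeutral a) {p : L} (q : L) (hp : p ≤ a) :
    a ⊓ (p ⊔ q) = p ⊔ a ⊓ q := by
  have h := ha p q
  rw [sup_eq_left.2 hp, inf_sup_self, inf_eq_right.2 hp] at h
  rw [h]
  exact sup_eq_left.2 (inf_le_left.trans le_sup_left)

lemma IsNeutral.inf_sup (ha : IsNeutral a) (x y : L) :
    a ⊓ (x ⊔ y) = a ⊓ x ⊔ a ⊓ y := by
  refine le_antisymm ?_ (sup_le (inf_le_inf_left _ le_sup_left) (inf_le_inf_left _ le_sup_right))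
  have h1 : a ⊓ (x ⊔ y) ≤ (a ⊔ x) ⊓ (a ⊔ y) ⊓ (x ⊔ y) :=
    le_inf (le_inf (inf_le_left.trans le_sup_left) (inf_le_left.trans le_sup_left)) inf_le_right
  rw [ha x y] at h1
  have h2 : a ⊓ (x ⊔ y) ≤ a ⊓ (a ⊓ x ⊔ a ⊓ y ⊔ x ⊓ y) := le_inf inf_le_left h1
  rwa [ha.inf_sup_of_le _ (sup_le inf_le_left inf_le_left),
    sup_eq_left.2 ((inf_le_inf_left a inf_le_left).trans le_sup_left)] at h2

lemma IsNeutral.dual (ha : IsNeutral a) : IsNeutral (OrderDual.toDual a) :=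
  fun x y => (ha (OrderDual.ofDual x) (OrderDual.ofDual y)).symm

lemma IsNeutral.sup_inf (ha : IsNeutral a) (x y : L) :
    a ⊔ x ⊓ y = (a ⊔ x) ⊓ (a ⊔ y) :=
  ha.dual.inf_sup (OrderDual.toDual x) (OrderDual.toDual y)

lemma IsNeutral.cancel (ha : IsNeutral a) {x y : L}
    (h1 : a ⊓ x = a ⊓ y) (h2 : a ⊔ x = a ⊔ y) : x = y := by
  have key : ∀ u v : L, a ⊓ u = a ⊓ v → a ⊔ u = a ⊔ v → u ≤ v := by
    intro u v e1 e2
    have h := ha u v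
    have hu : u ≤ (a ⊔ u) ⊓ (a ⊔ v) ⊓ (u ⊔ v) :=
      le_inf (le_inf le_sup_right (e2 ▸ le_sup_right)) le_sup_left
    rw [h] at hu
    calc u ≤ a ⊓ u ⊔ a ⊓ v ⊔ u ⊓ v := hu
    _ ≤ v := by rw [e1]; exact sup_le (sup_le inf_le_right inf_le_right) inf_le_right
  exact le_antisymm (key x y h1 h2) (key y x h1.symm h2.symm)

lemma isNeutral_bot [OrderBot L] : IsNeutral (⊥ : L) := by
  intro x y
  simp only [bot_sup_eq, bot_inf_eq]
  exact inf_eq_left.2 ((inf_le_left : x ⊓ y ≤ x).trans le_sup_left)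

lemma isNeutral_top [OrderTop L] : IsNeutral (⊤ : L) := by
  intro x y
  simp only [top_sup_eq, top_inf_eq]
  exact (sup_eq_left.2 ((inf_le_left : x ⊓ y ≤ x).trans le_sup_left)).symm

end NeutralLemmas
section Transfer
variable {L M : Type*} [Lattice L] [Lattice M]

lemma IsNeutral.map (e : L ≃o M) {a : L} (ha : IsNeutral a) : IsNeutral (e a) := by
  intro x y
  obtain ⟨x, rfl⟩ := e.surjective x
  obtain ⟨y, rfl⟩ := e.surjective y
  simp only [← OrderIso.map_sup, ← OrderIso.map_inf]
  exact congrArg e (ha x y)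

lemma IsCentral.map [BoundedOrder L] [BoundedOrder M] (e : L ≃o M) {a : L}
    (ha : IsCentral a) : IsCentral (e a) := by
  obtain ⟨hn, b, hib, hsb⟩ := ha
  refine ⟨hn.map e, e b, ?_, ?_⟩
  · rw [← OrderIso.map_inf, hib, OrderIso.map_bot]
  · rw [← OrderIso.map_sup, hsb, OrderIso.map_top]

variable {X Y : Type*} [Lattice X] [Lattice Y]

lemma IsNeutral.prodMk {a : X} {b : Y} (ha : IsNeutral a) (hb : IsNeutral b) :
    IsNeutral ((a, b) : X × Y) :=
  fun x y => Prod.ext (ha x.1 y.1) (hb x.2 y.2)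

lemma IsNeutral.fst {p : X × Y} (h : IsNeutral p) : IsNeutral p.1 :=
  fun x y => congrArg Prod.fst (h (x, p.2) (y, p.2))

lemma IsNeutral.snd {p : X × Y} (h : IsNeutral p) : IsNeutral p.2 :=
  fun x y => congrArg Prod.snd (h (p.1, x) (p.1, y))

variable [BoundedOrder X] [BoundedOrder Y]

lemma IsCentral.prodMk {a : X} {b : Y} (ha : IsCentral a) (hb : IsCentral b) :
    IsCentral ((a, b) : X × Y) := by
  obtain ⟨hna, a', hia, hsa⟩ := ha
  obtain ⟨hnb, b', hib, hsb⟩ := hb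
  exact ⟨hna.prodMk hnb, (a', b'), Prod.ext hia hib, Prod.ext hsa hsb⟩

lemma IsCentral.fst {p : X × Y} (h : IsCentral p) : IsCentral p.1 := by
  obtain ⟨hn, q, hiq, hsq⟩ := h
  exact ⟨hn.fst, q.1, congrArg Prod.fst hiq, congrArg Prod.fst hsq⟩

lemma IsCentral.snd {p : X × Y} (h : IsCentral p) : IsCentral p.2 := by
  obtain ⟨hn, q, hiq, hsq⟩ := h
  exact ⟨hn.snd, q.2, congrArg Prod.snd hiq, congrArg Prod.snd hsq⟩

lemma isCentral_bot : IsCentral (⊥ : X) := ⟨isNeutral_bot, ⊤, by simp, by simp⟩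

lemma isCentral_top : IsCentral (⊤ : X) := ⟨isNeutral_top, ⊥, by simp, by simp⟩

end Transfer
section Decomp
variable {L : Type*} [Lattice L] [BoundedOrder L]

/-- The decomposition isomorphism attached to a "splitting pair". -/
def decompIso (a b : L)
    (h1 : ∀ x : L, x = x ⊓ a ⊔ x ⊓ b)
    (h2 : ∀ u v : L, u ≤ a → v ≤ b → a ⊓ (u ⊔ v) = u)
    (h3 : ∀ u v : L, u ≤ a → v ≤ b → b ⊓ (u ⊔ v) = v) :
    L ≃o Set.Iic a × Set.Iic b where
  toFun x := (⟨x ⊓ a, inf_le_right⟩, ⟨x ⊓ b, inf_le_right⟩)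
  invFun p := p.1.val ⊔ p.2.val
  left_inv x := (h1 x).symm
  right_inv p := by
    obtain ⟨⟨u, hu⟩, ⟨v, hv⟩⟩ := p
    refine Prod.ext (Subtype.ext ?_) (Subtype.ext ?_)
    · exact (inf_comm _ _).trans (h2 u v hu hv)
    · exact (inf_comm _ _).trans (h3 u v hu hv)
  map_rel_iff' := by
    intro x y
    simp only [Equiv.coe_fn_mk, Prod.mk_le_mk, Subtype.mk_le_mk]
    constructor
    · rintro ⟨hxa, hxb⟩
      calc x = x ⊓ a ⊔ x ⊓ b := h1 x
      _ ≤ y ⊓ a ⊔ y ⊓ b := sup_le_sup hxa hxb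
      _ = y := (h1 y).symm
    · intro hxy
      exact ⟨inf_le_inf_right _ hxy, inf_le_inf_right _ hxy⟩

lemma central_of_decomp (a b : L)
    (h1 : ∀ x : L, x = x ⊓ a ⊔ x ⊓ b)
    (h2 : ∀ u v : L, u ≤ a → v ≤ b → a ⊓ (u ⊔ v) = u)
    (h3 : ∀ u v : L, u ≤ a → v ≤ b → b ⊓ (u ⊔ v) = v) :
    IsCentral a ∧ IsCentral b := by
  set e := decompIso a b h1 h2 h3 with he
  have hab : a ⊓ b = ⊥ := by
    have := h2 ⊥ b bot_le le_rfl
    rwa [bot_sup_eq] at this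
  have hba : b ⊓ a = ⊥ := (inf_comm _ _).trans hab
  have ea : e a = (⊤, ⊥) := by
    refine Prod.ext (Subtype.ext ?_) (Subtype.ext ?_)
    · show a ⊓ a = ((⊤ : Set.Iic a) : L)
      rw [Set.Iic.coe_top, inf_idem]
    · show a ⊓ b = ((⊥ : Set.Iic b) : L)
      rw [Set.Iic.coe_bot, hab]
  have eb : e b = (⊥, ⊤) := by
    refine Prod.ext (Subtype.ext ?_) (Subtype.ext ?_)
    · show b ⊓ a = ((⊥ : Set.Iic a) : L)
      rw [Set.Iic.coe_bot, hba]
    · show b ⊓ b = ((⊤ : Set.Iic b) : L)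
      rw [Set.Iic.coe_top, inf_idem]
  constructor
  · have := (isCentral_top (X := Set.Iic a)).prodMk (isCentral_bot (X := Set.Iic b))
    have h := this.map e.symm
    rwa [← ea, e.symm_apply_apply] at h
  · have := (isCentral_bot (X := Set.Iic a)).prodMk (isCentral_top (X := Set.Iic b))
    have h := this.map e.symm
    rwa [← eb, e.symm_apply_apply] at h

/-- For a genuinely central element with complement `b`, the splitting conditions hold. -/
lemma IsCentral.splitting {a b : L} (ha : IsNeutral a) (hib : a ⊓ b = ⊥) (hsb : a ⊔ b = ⊤) :
    (∀ x : L, x = x ⊓ a ⊔ x ⊓ b) ∧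
    (∀ u v : L, u ≤ a → v ≤ b → a ⊓ (u ⊔ v) = u) ∧
    (∀ u v : L, u ≤ a → v ≤ b → b ⊓ (u ⊔ v) = v) := by
  refine ⟨?_, ?_, ?_⟩
  · intro x
    have h := ha b x
    rw [hib, bot_sup_eq] at h
    refine le_antisymm ?_ (sup_le inf_le_left inf_le_left)
    have hx : x ≤ (a ⊔ b) ⊓ (a ⊔ x) ⊓ (b ⊔ x) :=
      le_inf (le_inf (by rw [hsb]; exact le_top) le_sup_right) le_sup_right
    rw [h] at hx
    calc x ≤ a ⊓ x ⊔ b ⊓ x := hx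
    _ = x ⊓ a ⊔ x ⊓ b := by rw [inf_comm a x, inf_comm b x]
  · intro u v hu hv
    rw [ha.inf_sup u v, inf_eq_right.2 hu]
    have : a ⊓ v = ⊥ := le_bot_iff.1 ((inf_le_inf_left a hv).trans hib.le)
    rw [this, sup_bot_eq]
  · intro u v hu hv
    have hn : a ⊓ (b ⊓ (u ⊔ v)) = a ⊓ v := by
      rw [← inf_assoc, hib, bot_inf_eq]
      exact (le_bot_iff.1 ((inf_le_inf_left a hv).trans hib.le)).symm
    have hs : a ⊔ b ⊓ (u ⊔ v) = a ⊔ v := by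
      rw [ha.sup_inf b (u ⊔ v), hsb, top_inf_eq, ← sup_assoc, sup_eq_left.2 hu]
    exact ha.cancel hn hs
end Decomp
section Closure
variable {L : Type*} [Lattice L] [BoundedOrder L]

lemma IsCentral.compl {a b : L} (ha : IsCentral a) (hib : a ⊓ b = ⊥) (hsb : a ⊔ b = ⊤) :
    IsCentral b := by
  obtain ⟨h1, h2, h3⟩ := IsCentral.splitting ha.1 hib hsb
  exact (central_of_decomp a b h1 h2 h3).2

lemma IsCentral.infC {c d : L} (hc : IsCentral c) (hd : IsCentral d) : IsCentral (c ⊓ d) := by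
  obtain ⟨hnc, c', hic, hsc⟩ := hc
  obtain ⟨h1, h2, h3⟩ := IsCentral.splitting hnc hic hsc
  set e := decompIso c c' h1 h2 h3 with he
  have hed : IsCentral (e d) := hd.map e
  have key : e (c ⊓ d) = ((e d).1, ⊥) := by
    refine Prod.ext (Subtype.ext ?_) (Subtype.ext ?_)
    · show c ⊓ d ⊓ c = ((e d).1 : L)
      show c ⊓ d ⊓ c = d ⊓ c
      rw [inf_comm c d, inf_assoc, inf_idem]
    · show c ⊓ d ⊓ c' = ((⊥ : Set.Iic c') : L)
      rw [Set.Iic.coe_bot]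
      exact le_bot_iff.1 ((inf_le_inf_right c' inf_le_left).trans hic.le)
  have h := (hed.fst.prodMk (isCentral_bot (X := Set.Iic c'))).map e.symm
  rwa [← key, e.symm_apply_apply] at h

lemma IsCentral.supC {c d : L} (hc : IsCentral c) (hd : IsCentral d) : IsCentral (c ⊔ d) := by
  obtain ⟨hnc, c', hic, hsc⟩ := hc
  have hc' : IsCentral c' := IsCentral.compl ⟨hnc, c', hic, hsc⟩ hic hsc
  obtain ⟨h1, h2, h3⟩ := IsCentral.splitting hnc hic hsc
  set e := decompIso c c' h1 h2 h3 with he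
  have hed : IsCentral (e d) := hd.map e
  have key : e (c ⊔ d) = (⊤, (e d).2) := by
    refine Prod.ext (Subtype.ext ?_) (Subtype.ext ?_)
    · show (c ⊔ d) ⊓ c = ((⊤ : Set.Iic c) : L)
      rw [Set.Iic.coe_top]
      exact inf_eq_right.2 le_sup_left
    · show (c ⊔ d) ⊓ c' = ((e d).2 : L)
      show (c ⊔ d) ⊓ c' = d ⊓ c'
      rw [inf_comm _ c', inf_comm d c', hc'.1.inf_sup c d, inf_comm c' c, hic, bot_sup_eq]
  have h := ((isCentral_top (X := Set.Iic c)).prodMk hed.snd).map e.symm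
  rwa [← key, e.symm_apply_apply] at h

lemma finsetSup_central (t : Finset L) (h : ∀ b ∈ t, IsCentral b) : IsCentral (t.sup id) := by
  classical
  induction t using Finset.induction_on with
  | empty => simpa using (isCentral_bot (X := L))
  | insert _ _ hnotmem ih =>
    rename_i a s
    rw [Finset.sup_insert]
    exact (h a (Finset.mem_insert_self a s)).supC
      (ih fun b hb => h b (Finset.mem_insert_of_mem hb))

lemma IsNeutral.inf_finsetSup {a : L} (ha : IsNeutral a) (t : Finset L) :
    a ⊓ t.sup id = t.sup fun b => a ⊓ b := by
  classical
  induction t using Finset.induction_on with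
  | empty => simp
  | insert _ _ hnotmem ih =>
    rename_i c s
    rw [Finset.sup_insert, Finset.sup_insert, ha.inf_sup, ih]; rfl

end Closure
section Spatial
variable {L : Type u} [CompleteLattice L] [IsCompactlyGenerated L]

lemma inf_sSup_le_of {a z : L} {S : Set L}
    (h : ∀ t : Finset L, ↑t ⊆ S → a ⊓ t.sup id ≤ z) : a ⊓ sSup S ≤ z := by
  rw [inf_sSup_eq_iSup_inf_sup_finset]
  exact iSup_le fun t => iSup_le fun ht => h t ht

lemma CompletelySupIrred.le_or_le {p b b' : L} (hp : CompletelySupIrred p)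
    (hb : IsCentral b) (hib : b ⊓ b' = ⊥) (hsb : b ⊔ b' = ⊤) : p ≤ b ∨ p ≤ b' := by
  obtain ⟨h1, -, -⟩ := IsCentral.splitting hb.1 hib hsb
  have hp2 := h1 p
  by_contra hcon
  push_neg at hcon
  obtain ⟨hnb, hnb'⟩ := hcon
  have l1 : p ⊓ b ≤ sSup {v | v < p} :=
    le_sSup (lt_of_le_of_ne inf_le_left fun h => hnb (inf_eq_left.1 h))
  have l2 : p ⊓ b' ≤ sSup {v | v < p} :=
    le_sSup (lt_of_le_of_ne inf_le_left fun h => hnb' (inf_eq_left.1 h))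
  have : p ≤ sSup {v | v < p} := hp2.le.trans (sup_le l1 l2)
  exact absurd (lt_of_le_of_lt this hp.2) (lt_irrefl p)

lemma exists_catom (hSp : ∀ x : L, x = sSup {p : L | CompletelySupIrred p ∧ p ≤ x})
    {p : L} (hp : CompletelySupIrred p) :
    ∃ a : L, (IsCentral a ∧ a ≠ ⊥ ∧ ∀ b : L, IsCentral b → b ≤ a → b = ⊥ ∨ b = a) ∧ p ≤ a := by
  classical
  set C : Set L := {c | IsCentral c ∧ p ≤ c} with hC
  set D : Set L := {d | IsCentral d ∧ ∃ c, (IsCentral c ∧ p ≤ c) ∧ c ⊓ d = ⊥ ∧ c ⊔ d = ⊤} with hD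
  set A := sInf C with hA
  set B := sSup D with hB
  have hpA : p ≤ A := le_sInf fun c hc => hc.2
  have claim : ∀ (u : L), ∀ t : Finset L, ↑t ⊆ D → A ⊓ (u ⊔ t.sup id) ≤ u := by
    intro u t
    induction t using Finset.induction_on with
    | empty => intro _; simp only [Finset.sup_empty, sup_bot_eq]; exact inf_le_right
    | insert _ _ hnm ih =>
      rename_i d s
      intro hins
      have hd : d ∈ D := by
        apply hins
        rw [Finset.coe_insert]
        exact Set.mem_insert d _
      have hs : ↑s ⊆ D := by
        refine Set.Subset.trans ?_ hins
        rw [Finset.coe_insert]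
        exact Set.subset_insert d _
      obtain ⟨hdC, c, ⟨hcC, hpc⟩, hcd, hcds⟩ := hd
      have hAc : A ≤ c := sInf_le ⟨hcC, hpc⟩
      rw [Finset.sup_insert]
      have hre : u ⊔ (id d ⊔ s.sup id) = d ⊔ (u ⊔ s.sup id) := by
        show u ⊔ (d ⊔ s.sup id) = d ⊔ (u ⊔ s.sup id)
        rw [sup_left_comm]
      rw [hre]
      have calc1 : A ⊓ (d ⊔ (u ⊔ s.sup id)) = A ⊓ (c ⊓ (d ⊔ (u ⊔ s.sup id))) := by
        rw [← inf_assoc, inf_eq_left.2 hAc]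
      have calc2 : c ⊓ (d ⊔ (u ⊔ s.sup id)) = c ⊓ (u ⊔ s.sup id) := by
        rw [hcC.1.inf_sup, hcd, bot_sup_eq]
      rw [calc1, calc2, ← inf_assoc, inf_eq_left.2 hAc]
      exact ih hs
  have key : ∀ u v : L, u ≤ A → v ≤ B → A ⊓ (u ⊔ v) = u := by
    intro u v hu hv
    refine le_antisymm ?_ (le_inf hu le_sup_left)
    have hub : u ⊔ v ≤ u ⊔ B := sup_le_sup_left hv u
    refine le_trans (inf_le_inf_left A hub) ?_
    rw [hB, ← sSup_insert]
    apply inf_sSup_le_of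
    intro t ht
    have hsub : ↑(t.erase u) ⊆ D := by
      intro b hb
      rw [Finset.coe_erase] at hb
      rcases ht hb.1 with h | h
      · exact absurd h hb.2
      · exact h
    have hle : t.sup id ≤ u ⊔ (t.erase u).sup id := by
      apply Finset.sup_le
      intro b hb
      by_cases hbu : b = u
      · rw [hbu]; exact le_sup_left
      · exact (Finset.le_sup (f := id) (Finset.mem_erase.2 ⟨hbu, hb⟩)).trans le_sup_right
    exact le_trans (inf_le_inf_left A hle) (claim u (t.erase u) hsub)
  have hAB : A ⊓ B = ⊥ := by
    have := key ⊥ B bot_le le_rfl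
    rwa [bot_sup_eq] at this
  have split : ∀ q : L, CompletelySupIrred q → q ≤ A ∨ q ≤ B := by
    intro q hq
    by_cases hall : ∀ c, (IsCentral c ∧ p ≤ c) → q ≤ c
    · left; exact le_sInf fun c hc => hall c hc
    · right
      push_neg at hall
      obtain ⟨c, hcC, hqc⟩ := hall
      obtain ⟨hnc, c', hic, hsc⟩ := hcC.1
      rcases hq.le_or_le hcC.1 hic hsc with h | h
      · exact absurd h hqc
      · exact h.trans (le_sSup ⟨hcC.1.compl hic hsc, c, hcC, hic, hsc⟩)
  have h1 : ∀ x : L, x = x ⊓ A ⊔ x ⊓ B := by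
    intro x
    refine le_antisymm ?_ (sup_le inf_le_left inf_le_left)
    conv_lhs => rw [hSp x]
    apply sSup_le
    rintro q ⟨hq, hqx⟩
    rcases split q hq with h | h
    · exact le_trans (le_inf hqx h) le_sup_left
    · exact le_trans (le_inf hqx h) le_sup_right
  have h3 : ∀ u v : L, u ≤ A → v ≤ B → B ⊓ (u ⊔ v) = v := by
    intro u v hu hv
    refine le_antisymm ?_ (le_inf hv le_sup_right)
    rw [inf_comm, hB]
    apply inf_sSup_le_of
    intro t ht
    have hXc : IsCentral (t.sup id) := finsetSup_central t fun b hb => (ht hb).1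
    have hXB : t.sup id ≤ B := Finset.sup_le fun b hb => le_sSup (ht hb)
    have hXA : t.sup id ⊓ A = ⊥ := by
      rw [inf_comm]
      exact le_bot_iff.1 ((inf_le_inf_left A hXB).trans hAB.le)
    calc (u ⊔ v) ⊓ t.sup id = t.sup id ⊓ (u ⊔ v) := inf_comm _ _
    _ = t.sup id ⊓ u ⊔ t.sup id ⊓ v := hXc.1.inf_sup u v
    _ ≤ ⊥ ⊔ v := sup_le_sup ((inf_le_inf_left _ hu).trans hXA.le) inf_le_right
    _ = v := bot_sup_eq v
  obtain ⟨hcA, hcB⟩ := central_of_decomp A B h1 key h3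
  refine ⟨A, ⟨hcA, ?_, ?_⟩, hpA⟩
  · intro h
    exact hp.1 (le_bot_iff.1 (h ▸ hpA))
  · intro b hb hbA
    obtain ⟨hnb, b', hib, hsb⟩ := hb
    have hbfull : IsCentral b := ⟨hnb, b', hib, hsb⟩
    rcases hp.le_or_le hbfull hib hsb with h | h
    · right; exact le_antisymm hbA (sInf_le ⟨hbfull, h⟩)
    · left
      have hb' : IsCentral b' := hbfull.compl hib hsb
      have hAb' : A ≤ b' := sInf_le ⟨hb', h⟩
      exact le_bot_iff.1 ((le_inf le_rfl (hbA.trans hAb')).trans hib.le)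

end Spatial


/-- Libkin's Decomposition Theorem: every algebraic and spatial lattice is
isomorphic to a direct product of directly indecomposable lattices. -/
theorem libkin_decomposition {L : Type u} [CompleteLattice L] [IsCompactlyGenerated L]
    (hSpatial : ∀ x : L, x = sSup {p : L | CompletelySupIrred p ∧ p ≤ x}) :
    TotallyDecomposable L := by

  classical
  set At : Set L :=
    {a | IsCentral a ∧ a ≠ ⊥ ∧ ∀ b : L, IsCentral b → b ≤ a → b = ⊥ ∨ b = a} with hAtDef
  have hmem : ∀ a ∈ At, IsCentral a ∧ a ≠ ⊥ ∧
      ∀ b : L, IsCentral b → b ≤ a → b = ⊥ ∨ b = a := fun a ha => ha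
  have hdisj : ∀ a ∈ At, ∀ b ∈ At, a ≠ b → a ⊓ b = ⊥ := by
    intro a ha b hb hne
    obtain ⟨hca, hnea, hmina⟩ := hmem a ha
    obtain ⟨hcb, hneb, hminb⟩ := hmem b hb
    have hc : IsCentral (a ⊓ b) := hca.infC hcb
    rcases hmina _ hc inf_le_left with h | h
    · exact h
    · have hab : a ≤ b := inf_eq_left.1 h
      rcases hminb a hca hab with h2 | h2
      · exact absurd h2 hnea
      · exact absurd h2 hne
  have hTop : sSup At = ⊤ := by
    refine le_antisymm le_top ?_
    conv_lhs => rw [hSpatial ⊤]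
    apply sSup_le
    rintro q ⟨hq, -⟩
    obtain ⟨a, haAt, hqa⟩ := exists_catom hSpatial hq
    exact hqa.trans (le_sSup haAt)
  have N1aux : ∀ (x : L) (t : Finset L), ↑t ⊆ At →
      x ⊓ t.sup id ≤ ⨆ i : At, x ⊓ (i : L) := by
    intro x t
    induction t using Finset.induction_on with
    | empty => intro _; simp
    | insert _ _ hnm ih =>
      rename_i a s
      intro hins
      have haAt : a ∈ At := hins (by rw [Finset.coe_insert]; exact Set.mem_insert _ _)
      have hsAt : ↑s ⊆ At := by
        refine Set.Subset.trans ?_ hins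
        rw [Finset.coe_insert]
        exact Set.subset_insert a _
      have hsa : a ⊓ s.sup id = ⊥ := by
        rw [(hmem a haAt).1.1.inf_finsetSup]
        refine le_bot_iff.1 (Finset.sup_le fun b hb => ?_)
        exact (hdisj a haAt b (hsAt hb) fun h => hnm (h ▸ hb)).le
      rw [Finset.sup_insert]
      have hmed := (hmem a haAt).1.1 (s.sup id) x
      have hle : x ⊓ (id a ⊔ s.sup id) ≤ a ⊓ x ⊔ s.sup id ⊓ x := by
        have h0 : x ⊓ (a ⊔ s.sup id) ≤
            (a ⊔ s.sup id) ⊓ (a ⊔ x) ⊓ (s.sup id ⊔ x) :=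
          le_inf (le_inf inf_le_right (inf_le_left.trans le_sup_right))
            (inf_le_left.trans le_sup_right)
        rw [hmed, hsa, bot_sup_eq] at h0
        exact h0
      refine hle.trans (sup_le ?_ ?_)
      · exact (inf_comm a x).le.trans (le_iSup (fun i : At => x ⊓ (i : L)) ⟨a, haAt⟩)
      · exact (inf_comm (s.sup id) x).le.trans (ih hsAt)
  have N1 : ∀ x : L, x ≤ ⨆ i : At, x ⊓ (i : L) := by
    intro x
    calc x = x ⊓ sSup At := by rw [hTop, inf_top_eq]
    _ ≤ ⨆ i : At, x ⊓ (i : L) := inf_sSup_le_of fun t ht => N1aux x t ht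
  have N2 : ∀ (u : ∀ i : At, Set.Iic (i : L)) (i : At),
      (i : L) ⊓ (⨆ j, ((u j : L))) = (u i : L) := by
    intro u i
    refine le_antisymm ?_ (le_inf (u i).2 (le_iSup (fun j => ((u j : L))) i))
    rw [← sSup_range]
    apply inf_sSup_le_of
    intro t ht
    rw [(hmem _ i.2).1.1.inf_finsetSup]
    apply Finset.sup_le
    intro b hb
    obtain ⟨j, rfl⟩ := ht hb
    by_cases hji : j = i
    · subst hji; exact inf_le_right
    · have hij : (i : L) ⊓ (j : L) = ⊥ :=
        hdisj _ i.2 _ j.2 fun h => hji (Subtype.ext h.symm)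
      exact ((inf_le_inf_left _ (u j).2).trans hij.le).trans bot_le
  refine ⟨At, fun i => BddLat.of (Set.Iic (i : L)), ?_, ?_⟩
  · -- direct indecomposability of each factor
    intro i A B hg
    obtain ⟨g0⟩ := hg
    have g : Set.Iic (i : L) ≃o ↥A × ↥B := g0
    obtain ⟨hcA, hnebot, hmin⟩ := hmem _ i.2
    obtain ⟨hn, a', hia, hsa⟩ := hcA
    obtain ⟨h1, h2, h3⟩ := IsCentral.splitting hn hia hsa
    set e0 := decompIso (i : L) a' h1 h2 h3 with he0
    have hw : IsCentral (g.symm (⊤, ⊥)) :=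
      ((isCentral_top (X := ↥A)).prodMk (isCentral_bot (X := ↥B))).map g.symm
    set w := g.symm (⊤, ⊥) with hwdef
    have hzc : IsCentral (e0.symm (w, ⊥)) := (hw.prodMk isCentral_bot).map e0.symm
    have hzval : e0.symm (w, ⊥) = (w : L) := by
      show (w : L) ⊔ ((⊥ : Set.Iic a') : L) = (w : L)
      rw [Set.Iic.coe_bot, sup_bot_eq]
    rw [hzval] at hzc
    rcases hmin (w : L) hzc w.2 with h | h
    · left
      have hwb : w = ⊥ := Subtype.ext (by rw [h, Set.Iic.coe_bot])
      have h2 : ((⊤, ⊥) : ↥A × ↥B) = ⊥ := by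
        calc ((⊤, ⊥) : ↥A × ↥B) = g w := (g.apply_symm_apply _).symm
        _ = g ⊥ := by rw [hwb]
        _ = ⊥ := g.map_bot
      exact subsingleton_of_bot_eq_top (congrArg Prod.fst h2).symm
    · right
      have hwt : w = ⊤ := Subtype.ext (by rw [h, Set.Iic.coe_top])
      have h2 : ((⊤, ⊥) : ↥A × ↥B) = ⊤ := by
        calc ((⊤, ⊥) : ↥A × ↥B) = g w := (g.apply_symm_apply _).symm
        _ = g ⊤ := by rw [hwt]
        _ = ⊤ := g.map_top
      exact subsingleton_of_bot_eq_top (congrArg Prod.snd h2)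
  · -- the grand isomorphism
    have myIso : L ≃o ∀ i : At, Set.Iic (i : L) := by
      refine { toFun := fun x i => ⟨x ⊓ (i : L), inf_le_right⟩
               invFun := fun u => ⨆ i, ((u i : L))
               left_inv := fun x => le_antisymm (iSup_le fun i => inf_le_left) (N1 x)
               right_inv := fun u => funext fun i => Subtype.ext ((inf_comm _ _).trans (N2 u i))
               map_rel_iff' := ?_ }
      intro x y
      constructor
      · intro h
        calc x ≤ ⨆ i : At, x ⊓ (i : L) := N1 x
        _ ≤ ⨆ i : At, y ⊓ (i : L) := iSup_mono fun i => h i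
        _ ≤ y := iSup_le fun i => inf_le_left
      · intro hxy i
        exact Subtype.mk_le_mk.2 (inf_le_inf_right _ hxy)
    exact ⟨myIso⟩
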